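/- Let φ be a 3-CNF boolean formula over variables x_1, …, x_n with clauses C_1, …, C_m, each a disjunction of exactly three literals. Consider the finite set A = {z_1, …, z_n, z̄_1, …, z̄_n, ŷ} of 2n + 1 elements, where the literal x_i corresponds to the element z_i and the literal ¬x_i corresponds to the element z̄_i. Then φ is satisfiable if and only if there exists a linear order ≻ on A such that: (i) for every i ∈ {1, …, n}, at least one of z_i, z̄_i precedes ŷ in ≻; and (ii) for every clause C_j = ℓ_{j,1} ∨ ℓ_{j,2} ∨ ℓ_{j,3}, ŷ precedes at least one of the three elements corresponding to ℓ_{j,1}, ℓ_{j,2}, ℓ_{j,3} in ≻. -/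

import Mathlib

theorem idxOf_beq_congr {α : Type} [DecidableEq α] (inst : BEq α)
    (law : ∀ x y : α, @BEq.beq α inst x y = decide (x = y))
    (a : α) (l : List α) :
    @List.idxOf α inst a l = @List.idxOf α instBEqOfDecidableEq a l := by
  induction l with
  | nil => rfl
  | cons b t ih =>
    rw [show @List.idxOf α inst a (b :: t) = _ from List.idxOf_cons,
      show @List.idxOf α instBEqOfDecidableEq a (b :: t) = _ from @List.idxOf_cons _ _ _ _ instBEqOfDecidableEq, ih,
      law b a]
    rfl

/-- let `φ` be a 3-CNF formula over variables `x_1, …, x_n` with `m`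
clauses, each a disjunction of exactly three literals; a literal is encoded as a pair
`(i, b) : Fin n × Bool` (`(i, true)` is `x_i`, `(i, false)` is `¬x_i`).  Consider the
finite set `A = (Fin n × Bool) ⊕ Unit` of `2n + 1` elements, where `Sum.inl (i, true)`
is the element `z_i`, `Sum.inl (i, false)` is `z̄_i`, and `Sum.inr ()` is `ŷ`.  Then
`φ` is satisfiable iff there is a linear order on `A` (a duplicate-free list covering
`A`, where `x ≻ y` means `x` appears earlier) such that (i) for each `i`, at least one
of `z_i, z̄_i` precedes `ŷ`, and (ii) for each clause, `ŷ` precedes at least one of the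
three elements corresponding to its literals. -/
theorem stmt10 (n m : ℕ) (clause : Fin m → Fin 3 → Fin n × Bool) :
    (∃ v : Fin n → Bool, ∀ j : Fin m, ∃ k : Fin 3,
        v (clause j k).1 = (clause j k).2) ↔
    (∃ l : List ((Fin n × Bool) ⊕ Unit),
      l.Nodup ∧ l.toFinset = Finset.univ ∧
      (∀ i : Fin n,
        l.idxOf (Sum.inl (i, true)) < l.idxOf (Sum.inr ()) ∨
        l.idxOf (Sum.inl (i, false)) < l.idxOf (Sum.inr ())) ∧
      (∀ j : Fin m, ∃ k : Fin 3,
        l.idxOf (Sum.inr ()) < l.idxOf (Sum.inl (clause j k)))) := by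
  have hcongr : ∀ (a : (Fin n × Bool) ⊕ Unit) (l : List ((Fin n × Bool) ⊕ Unit)),
      l.idxOf a = @List.idxOf _ instBEqOfDecidableEq a l :=
    by
      refine fun a l => idxOf_beq_congr _ (fun x y => ?_) a l
      rcases x with ⟨i, b⟩ | ⟨⟩ <;> rcases y with ⟨j, c⟩ | ⟨⟩ <;>
        simp [Sum.instBEq, instBEqProd, BEq.beq] <;> try rfl
  simp only [hcongr]
  constructor
  · rintro ⟨v, hv⟩
    set A : List ((Fin n × Bool) ⊕ Unit) :=
      (List.finRange n).map (fun i => Sum.inl (i, !v i)) with hA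
    set B : List ((Fin n × Bool) ⊕ Unit) :=
      (List.finRange n).map (fun i => Sum.inl (i, v i)) with hB
    have hinjA : ∀ a b : Fin n, (Sum.inl (a, !v a) : (Fin n × Bool) ⊕ Unit)
        = Sum.inl (b, !v b) → a = b := by
      intro a b h
      simp only [Sum.inl.injEq, Prod.mk.injEq] at h
      exact h.1
    have hinjB : ∀ a b : Fin n, (Sum.inl (a, v a) : (Fin n × Bool) ⊕ Unit)
        = Sum.inl (b, v b) → a = b := by
      intro a b h
      simp only [Sum.inl.injEq, Prod.mk.injEq] at h
      exact h.1
    refine ⟨A ++ Sum.inr () :: B, ?_, ?_, ?_, ?_⟩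
    · refine List.nodup_append.2 ⟨?_, ?_, ?_⟩
      · exact (List.nodup_finRange n).map hinjA
      · refine List.nodup_cons.2 ⟨by simp [hB], (List.nodup_finRange n).map hinjB⟩
      · intro x hx y hx2 hxy
        subst hxy
        simp only [hA, List.mem_map, List.mem_finRange, true_and] at hx
        obtain ⟨i, rfl⟩ := hx
        rcases List.mem_cons.1 hx2 with h | h
        · exact absurd h (by simp)
        · simp only [hB, List.mem_map, List.mem_finRange, true_and] at h
          obtain ⟨j, hj⟩ := h
          simp only [Sum.inl.injEq, Prod.mk.injEq] at hj
          obtain ⟨rfl, h2⟩ := hj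
          exact (Bool.not_ne_self (v j)) h2.symm
    · apply Finset.eq_univ_iff_forall.2
      intro x
      rw [List.mem_toFinset]
      match x with
      | Sum.inr () => simp
      | Sum.inl (i, b) =>
        rcases Bool.eq_or_eq_not b (v i) with h | h
        · subst h; simp [hB]
        · subst h; simp [hA]
    · intro i
      have hmemA : Sum.inl (i, !v i) ∈ A := by simp [hA]
      have hynA : (Sum.inr () : (Fin n × Bool) ⊕ Unit) ∉ A := by simp [hA]
      have key : @List.idxOf _ instBEqOfDecidableEq (Sum.inl (i, !v i)) (A ++ Sum.inr () :: B)
          < @List.idxOf _ instBEqOfDecidableEq (Sum.inr ()) (A ++ Sum.inr () :: B) := by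
        rw [@List.idxOf_append_of_mem _ _ _ instBEqOfDecidableEq _ _ hmemA, @List.idxOf_append_of_notMem _ _ _ instBEqOfDecidableEq _ _ hynA,
          @List.idxOf_cons_self _ _ instBEqOfDecidableEq _ _]
        have := (@List.idxOf_lt_length_iff _ instBEqOfDecidableEq _ _ _).2 hmemA
        omega
      rcases hvi : v i with _ | _
      · left; rw [hvi] at key; simpa using key
      · right; rw [hvi] at key; simpa using key
    · intro j
      obtain ⟨k, hk⟩ := hv j
      refine ⟨k, ?_⟩
      have hynA : (Sum.inr () : (Fin n × Bool) ⊕ Unit) ∉ A := by simp [hA]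
      have hne : Sum.inl (clause j k) ∉ A := by
        simp only [hA, List.mem_map, List.mem_finRange, true_and]
        rintro ⟨i, hi⟩
        simp only [Sum.inl.injEq] at hi
        rw [← hi] at hk
        simp at hk
      rw [@List.idxOf_append_of_notMem _ _ _ instBEqOfDecidableEq _ _ hynA,
        @List.idxOf_append_of_notMem _ _ _ instBEqOfDecidableEq _ _ hne, @List.idxOf_cons_self _ _ instBEqOfDecidableEq _ _,
        @List.idxOf_cons_ne _ instBEqOfDecidableEq _ _ _ _ (by simp)]
      omega
  · rintro ⟨l, hnd, huniv, h1, h2⟩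
    have hmem : ∀ x : (Fin n × Bool) ⊕ Unit, x ∈ l := fun x => by
      rw [← List.mem_toFinset, huniv]; exact Finset.mem_univ x
    refine ⟨fun i => decide (@List.idxOf _ instBEqOfDecidableEq (Sum.inr ()) l
      < @List.idxOf _ instBEqOfDecidableEq (Sum.inl (i, true)) l), fun j => ?_⟩
    obtain ⟨k, hk⟩ := h2 j
    refine ⟨k, ?_⟩
    have hc : clause j k = ((clause j k).1, (clause j k).2) := rfl
    rcases hb : (clause j k).2 with _ | _
    · simp only [decide_eq_false_iff_not, not_lt]
      rw [hc, hb] at hk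
      rcases h1 (clause j k).1 with h | h
      · omega
      · exfalso
        have hinj := (@List.idxOf_inj _ instBEqOfDecidableEq _ _ _ (Sum.inr ())
          (hmem (Sum.inl ((clause j k).1, false)))).1
        have hne : @List.idxOf _ instBEqOfDecidableEq
            (Sum.inl ((clause j k).1, false)) l
            ≠ @List.idxOf _ instBEqOfDecidableEq (Sum.inr ()) l := by
          intro he
          exact absurd (hinj he) (by simp)
        omega
    · simp only [decide_eq_true_eq]
      rw [hc, hb] at hk
      exact hk
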